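/- Let k ≥ 1 and n ≥ 1 be integers, and write n = q·k + r with q, r ∈ ℕ and 0 ≤ r < k (Euclidean division). Let ω ∈ ℂ be a primitive k-th root of unity and let D be the n×n diagonal matrix with diagonal entries D_{ii} = ω^i for i = 0, 1, …, n−1. Then the complex vector space { X ∈ M_n(ℂ) : trace(X) = 0 and D·X = X·D } has dimension q·n + (q+1)·r − 1. -/

import Mathlib

open Finset Matrix Module

/-- Counting naturals below `n` with residue `c` mod `k`. -/
lemma stmt9_count_mod (k c : ℕ) (hk : 1 ≤ k) (hc : c < k) (n : ℕ) :
    ((Finset.range n).filter (fun i => i % k = c)).card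
      = n / k + if c < n % k then 1 else 0 := by
  induction n with
  | zero => simp
  | succ n ih =>
    have hb : n % k < k := Nat.mod_lt _ hk
    have key : (n + 1) / k = n / k ∧ (n + 1) % k = n % k + 1 ∨
        ((n + 1) / k = n / k + 1 ∧ (n + 1) % k = 0 ∧ n % k + 1 = k) := by
      have hdm : k * (n / k) + n % k = n := Nat.div_add_mod n k
      rcases Nat.lt_or_ge (n % k + 1) k with h2 | h2
      · left
        have := (Nat.div_mod_unique (a := n + 1) (b := k) (c := n % k + 1) (d := n / k)
          hk).2 ⟨by omega, h2⟩
        exact ⟨this.1, this.2⟩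
      · right
        have he : n % k + 1 = k := by omega
        have := (Nat.div_mod_unique (a := n + 1) (b := k) (c := 0) (d := n / k + 1)
          hk).2 ⟨by rw [Nat.mul_add, Nat.mul_one]; omega, hk⟩
        exact ⟨this.1, this.2, he⟩
    rw [Finset.range_add_one, Finset.filter_insert]
    by_cases h : n % k = c
    · rw [if_pos h, Finset.card_insert_of_notMem (by simp), ih]
      rcases key with ⟨h1, h2⟩ | ⟨h1, h2, h3⟩ <;> rw [h1, h2] <;>
        split_ifs <;> omega
    · rw [if_neg h, ih]
      rcases key with ⟨h1, h2⟩ | ⟨h1, h2, h3⟩ <;> rw [h1, h2] <;>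
        split_ifs <;> omega

lemma stmt9_fin_count (k c n : ℕ) (hk : 1 ≤ k) (hc : c < k) :
    ((Finset.univ : Finset (Fin n)).filter (fun i : Fin n => (i : ℕ) % k = c)).card
      = n / k + if c < n % k then 1 else 0 := by
  have himg : (Finset.range n).filter (fun i => i % k = c)
      = ((Finset.univ : Finset (Fin n)).filter (fun i : Fin n => (i : ℕ) % k = c)).image Fin.val := by
    ext b
    simp only [Finset.mem_filter, Finset.mem_range, Finset.mem_image, Finset.mem_univ, true_and]
    constructor
    · rintro ⟨hb, hc⟩; exact ⟨⟨b, hb⟩, hc, rfl⟩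
    · rintro ⟨a, ha, rfl⟩; exact ⟨a.2, ha⟩
  rw [← stmt9_count_mod k c hk hc n, himg,
    Finset.card_image_of_injective _ Fin.val_injective]

/-- Counting pairs with equal residues. -/
lemma stmt9_pairs (k n q r : ℕ) (hk : 1 ≤ k) (hdiv : n = q * k + r) (hr : r < k) :
    ((Finset.univ : Finset (Fin n × Fin n)).filter
        (fun p => (p.1 : ℕ) % k = (p.2 : ℕ) % k)).card = q * n + (q + 1) * r := by
  have hu := (Nat.div_mod_unique (a := n) (b := k) (c := r) (d := q) (by omega)).2
    ⟨by rw [hdiv]; ring, hr⟩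
  have hcard : ∀ c, c < k → ((Finset.univ : Finset (Fin n)).filter
      (fun i : Fin n => (i : ℕ) % k = c)).card = q + if c < r then 1 else 0 := by
    intro c hc; rw [stmt9_fin_count k c n hk hc, hu.1, hu.2]
  rw [Finset.card_eq_sum_card_fiberwise
    (f := fun p : Fin n × Fin n => (p.1 : ℕ) % k) (t := Finset.range k)
    (fun p _ => Finset.mem_range.mpr (Nat.mod_lt _ hk))]
  have hfib : ∀ c ∈ Finset.range k,
      (((Finset.univ : Finset (Fin n × Fin n)).filter
          (fun p => (p.1 : ℕ) % k = (p.2 : ℕ) % k)).filter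
        (fun p => (p.1 : ℕ) % k = c)).card
      = (q + if c < r then 1 else 0) * (q + if c < r then 1 else 0) := by
    intro c hck
    rw [Finset.filter_filter]
    have heq : ((Finset.univ : Finset (Fin n × Fin n)).filter
        (fun p => (p.1 : ℕ) % k = (p.2 : ℕ) % k ∧ (p.1 : ℕ) % k = c))
        = ((Finset.univ : Finset (Fin n)).filter (fun i : Fin n => (i : ℕ) % k = c)) ×ˢ
          ((Finset.univ : Finset (Fin n)).filter (fun i : Fin n => (i : ℕ) % k = c)) := by
      ext p
      simp only [Finset.mem_filter, Finset.mem_univ, true_and, Finset.mem_product]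
      constructor
      · rintro ⟨h1, h2⟩; exact ⟨h2, h1 ▸ h2⟩
      · rintro ⟨h1, h2⟩; exact ⟨h1.trans h2.symm, h1⟩
    rw [heq, Finset.card_product, hcard c (Finset.mem_range.mp hck)]
  rw [Finset.sum_congr rfl hfib]
  have hsplit : Finset.range k = Finset.range r ∪ Finset.Ico r k := by
    rw [Finset.range_eq_Ico, Finset.range_eq_Ico, Finset.Ico_union_Ico_eq_Ico (Nat.zero_le r) hr.le]
  rw [hsplit, Finset.sum_union (by
    simp only [Finset.disjoint_left, Finset.mem_range, Finset.mem_Ico]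
    intro a ha; omega)]
  have h1 : ∑ c ∈ Finset.range r, (q + if c < r then 1 else 0) *
      (q + if c < r then 1 else 0) = r * ((q + 1) * (q + 1)) := by
    rw [Finset.sum_congr rfl (fun c hc => by
      rw [if_pos (Finset.mem_range.mp hc)]), Finset.sum_const, Finset.card_range,
      smul_eq_mul]
  have h2 : ∑ c ∈ Finset.Ico r k, (q + if c < r then 1 else 0) *
      (q + if c < r then 1 else 0) = (k - r) * (q * q) := by
    rw [Finset.sum_congr rfl (fun c hc => by
      rw [if_neg (by simpa using (Finset.mem_Ico.mp hc).1)]), Finset.sum_const,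
      Nat.card_Ico, smul_eq_mul, Nat.add_zero]
  rw [h1, h2]
  obtain ⟨m, hm⟩ : ∃ m, k = r + m := ⟨k - r, by omega⟩
  subst hm
  have hmm : r + m - r = m := by omega
  rw [hmm, hdiv]; ring

lemma stmt9_pow_iff (k : ℕ) (hk : 1 ≤ k) (ω : ℂ) (hω : IsPrimitiveRoot ω k)
    (i j : ℕ) : ω ^ i = ω ^ j ↔ i % k = j % k := by
  have hred : ∀ a : ℕ, ω ^ a = ω ^ (a % k) := by
    intro a
    conv_lhs => rw [← Nat.div_add_mod a k]
    rw [pow_add, pow_mul, hω.pow_eq_one, one_pow, one_mul]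
  constructor
  · intro h
    exact hω.pow_inj (Nat.mod_lt _ hk) (Nat.mod_lt _ hk)
      (by rw [← hred, ← hred, h])
  · intro h; rw [hred i, hred j, h]

theorem stmt_9
    (k n q r : ℕ) (hk : 1 ≤ k) (hn : 1 ≤ n) (hdiv : n = q * k + r) (hr : r < k)
    (ω : ℂ) (hω : IsPrimitiveRoot ω k)
    (D : Matrix (Fin n) (Fin n) ℂ) (hD : D = Matrix.diagonal fun i : Fin n => ω ^ (i : ℕ)) :
    (Module.finrank ℂ
        ↥(LinearMap.ker (Matrix.traceLinearMap (Fin n) ℂ ℂ)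
          ⊓ LinearMap.ker (LinearMap.mulLeft ℂ D - LinearMap.mulRight ℂ D)) : ℤ)
      = q * n + (q + 1) * r - 1 := by
  classical
  have hmem : ∀ X : Matrix (Fin n) (Fin n) ℂ,
      X ∈ LinearMap.ker (LinearMap.mulLeft ℂ D - LinearMap.mulRight ℂ D) ↔
      ∀ i j : Fin n, (i : ℕ) % k ≠ (j : ℕ) % k → X i j = 0 := by
    intro X
    rw [LinearMap.mem_ker, LinearMap.sub_apply, LinearMap.mulLeft_apply,
      LinearMap.mulRight_apply, sub_eq_zero, hD]
    constructor
    · intro h i j hij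
      have := congrFun (congrFun h i) j
      rw [Matrix.diagonal_mul, Matrix.mul_diagonal] at this
      have hne : ω ^ (i : ℕ) ≠ ω ^ (j : ℕ) := fun hc =>
        hij ((stmt9_pow_iff k hk ω hω _ _).mp hc)
      have h2 : (ω ^ (i : ℕ) - ω ^ (j : ℕ)) * X i j = 0 := by
        rw [sub_mul]; rw [mul_comm (X i j) (ω ^ (j : ℕ))] at this; rw [this]; ring
      rcases mul_eq_zero.mp h2 with h3 | h3
      · exact absurd (sub_eq_zero.mp h3) hne
      · exact h3
    · intro h
      ext i j
      rw [Matrix.diagonal_mul, Matrix.mul_diagonal]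
      by_cases hij : (i : ℕ) % k = (j : ℕ) % k
      · rw [(stmt9_pow_iff k hk ω hω _ _).mpr hij]; ring
      · rw [h i j hij]; ring
  set Sc : Finset (Fin n × Fin n) :=
    Finset.univ.filter (fun p : Fin n × Fin n => ¬ (p.1 : ℕ) % k = (p.2 : ℕ) % k) with hSc
  let π : Matrix (Fin n) (Fin n) ℂ →ₗ[ℂ] (↥Sc → ℂ) :=
    { toFun := fun X p => X p.1.1 p.1.2
      map_add' := fun X Y => rfl
      map_smul' := fun c X => rfl }
  have hkerπ : LinearMap.ker (LinearMap.mulLeft ℂ D - LinearMap.mulRight ℂ D)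
      = LinearMap.ker π := by
    ext X
    rw [hmem, LinearMap.mem_ker]
    constructor
    · intro h
      funext p
      exact h p.1.1 p.1.2 (Finset.mem_filter.mp p.2).2
    · intro h i j hij
      have hp : (i, j) ∈ Sc := Finset.mem_filter.mpr ⟨Finset.mem_univ _, hij⟩
      exact congrFun h ⟨(i, j), hp⟩
  have hπsurj : Function.Surjective π := by
    intro f
    refine ⟨fun i j => if h : (i, j) ∈ Sc then f ⟨(i, j), h⟩ else 0, ?_⟩
    funext p
    show (if h : (p.1.1, p.1.2) ∈ Sc then f ⟨(p.1.1, p.1.2), h⟩ else 0) = f p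
    rw [dif_pos p.2]
  have hrn := LinearMap.finrank_range_add_finrank_ker π
  rw [LinearMap.range_eq_top.mpr hπsurj, finrank_top] at hrn
  have hfr1 : finrank ℂ (↥Sc → ℂ) = Sc.card := by
    rw [Module.finrank_pi, Fintype.card_coe]
  have hfr2 : finrank ℂ (Matrix (Fin n) (Fin n) ℂ) = n * n := by
    simp [Module.finrank_matrix]
  have hcardsplit : (Finset.univ.filter
        (fun p : Fin n × Fin n => (p.1 : ℕ) % k = (p.2 : ℕ) % k)).card + Sc.card
      = n * n := by
    rw [hSc]
    have := Finset.card_filter_add_card_filter_not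
      (s := (Finset.univ : Finset (Fin n × Fin n)))
      (p := fun p : Fin n × Fin n => (p.1 : ℕ) % k = (p.2 : ℕ) % k)
    simpa [Finset.card_univ] using this
  have hpairs := stmt9_pairs k n q r hk hdiv hr
  have hW : finrank ℂ (LinearMap.ker π) = q * n + (q + 1) * r := by omega
  set W := LinearMap.ker (LinearMap.mulLeft ℂ D - LinearMap.mulRight ℂ D) with hWdef
  set T := Matrix.traceLinearMap (Fin n) ℂ ℂ with hT
  set T' : W →ₗ[ℂ] ℂ := T.comp W.subtype with hT'
  have hone : (1 : Matrix (Fin n) (Fin n) ℂ) ∈ W := by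
    rw [hWdef, LinearMap.mem_ker]
    simp [LinearMap.sub_apply]
  have hn0 : (n : ℂ) ≠ 0 := Nat.cast_ne_zero.mpr (by omega)
  have hT'surj : LinearMap.range T' = ⊤ := by
    rw [eq_top_iff]
    intro c _
    refine ⟨(c / n) • ⟨1, hone⟩, ?_⟩
    have h1 : T' ((c / (n : ℂ)) • (⟨1, hone⟩ : W))
        = (c / (n : ℂ)) • T' ⟨1, hone⟩ := LinearMap.map_smul _ _ _
    rw [h1]
    have h2 : T' (⟨1, hone⟩ : W) = (n : ℂ) := by
      show Matrix.trace (1 : Matrix (Fin n) (Fin n) ℂ) = (n : ℂ)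
      simp [Matrix.trace_one]
    rw [h2, smul_eq_mul]
    field_simp
  have hrn2 := LinearMap.finrank_range_add_finrank_ker T'
  rw [hT'surj, finrank_top, Module.finrank_self] at hrn2
  have hWrank : finrank ℂ W = q * n + (q + 1) * r := by rw [hkerπ]; exact hW
  have hkermap : LinearMap.ker T ⊓ W
      = Submodule.map W.subtype (LinearMap.ker T') := by
    rw [hT', LinearMap.ker_comp, Submodule.map_comap_subtype, inf_comm]
  have hpos : 1 ≤ q * n + (q + 1) * r := by
    rcases Nat.eq_zero_or_pos q with hq | hq
    · subst hq; simp at hdiv ⊢; omega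
    · have : 1 ≤ q * n := Nat.one_le_iff_ne_zero.mpr (by positivity)
      omega
  have hfinal : finrank ℂ ↥(LinearMap.ker T ⊓ W) = q * n + (q + 1) * r - 1 := by
    rw [hkermap, Submodule.finrank_map_subtype_eq]
    omega
  rw [hfinal, Nat.cast_sub hpos]
  push_cast
  ring
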